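/- Let A be a finite-dimensional commutative unital C*-algebra, ω a state on A, and S₁, S₂ ⊆ A. For a subset S let A(S) denote the unital star-subalgebra of A generated by S, and let ω₁, ω₂ denote the restrictions of ω to A(S₁), A(S₂). Then the following are equivalent: (i) S₁ and S₂ are ω-independent, i.e. ω(uv) = ω(u)ω(v) for all u ∈ A(S₁) and v ∈ A(S₂); (ii) there exist states ω₁' on A(S₁) and ω₂' on A(S₂) such that the multiplication map m : A(S₁) ⊗_ℂ A(S₂) → A, determined by m(u ⊗ v) = uv, is an algebra homomorphism whose image is A(S₁ ∪ S₂) and which satisfies ω(m(z)) = (ω₁' ⊗ ω₂')(z) for every z ∈ A(S₁) ⊗_ℂ A(S₂), where (ω₁' ⊗ ω₂')(u ⊗ v) = ω₁'(u)ω₂'(v); moreover in (ii) one may take ω₁' = ω₁ and ω₂' = ω₂. -/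

import Mathlib

open scoped ComplexOrder TensorProduct
set_option maxHeartbeats 800000

/-- A state on a (subalgebra of a) unital complex star algebra: a linear functional
which is positive (`0 ≤ ω (star b * b)` for all `b`, using the order on `ℂ`) and
normalized (`ω 1 = 1`). -/
def IsStateOn {B : Type*} [Ring B] [StarRing B] [Algebra ℂ B] (ω : B →ₗ[ℂ] ℂ) : Prop :=
  ω 1 = 1 ∧ ∀ b : B, 0 ≤ ω (star b * b)

/-- The multiplication map `A(S₁) ⊗[ℂ] A(S₂) →ₐ[ℂ] A`, `u ⊗ v ↦ u * v`, on the unital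
star-subalgebras generated by `S₁` and `S₂`. -/
noncomputable def mulTensorMap {A : Type*} [CommCStarAlgebra A] (S₁ S₂ : Set A) :
    (StarAlgebra.adjoin ℂ S₁) ⊗[ℂ] (StarAlgebra.adjoin ℂ S₂) →ₐ[ℂ] A :=
  Algebra.TensorProduct.productMap (StarAlgebra.adjoin ℂ S₁).subtype.toAlgHom
    (StarAlgebra.adjoin ℂ S₂).subtype.toAlgHom

/-- The product functional `ω₁ ⊗ ω₂` on the algebraic tensor product, determined by
`(ω₁ ⊗ ω₂)(u ⊗ v) = ω₁(u) · ω₂(v)`. -/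
noncomputable def tensorFunctional {B₁ B₂ : Type*} [Ring B₁] [Ring B₂] [Algebra ℂ B₁]
    [Algebra ℂ B₂] (ω₁ : B₁ →ₗ[ℂ] ℂ) (ω₂ : B₂ →ₗ[ℂ] ℂ) : B₁ ⊗[ℂ] B₂ →ₗ[ℂ] ℂ :=
  (LinearMap.mul' ℂ ℂ).comp (TensorProduct.map ω₁ ω₂)

/-- **Independence is equivalent to a tensor-product cover.**
Let `A` be a finite-dimensional commutative unital C*-algebra, `ω` a state on `A`,
and `S₁, S₂ ⊆ A`.  The following are equivalent:
(i) `S₁` and `S₂` are `ω`-independent, i.e. `ω (u * v) = ω u * ω v` for all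
`u ∈ A(S₁)`, `v ∈ A(S₂)` (the generated unital star-subalgebras);
(ii) there are states `ω₁'` on `A(S₁)` and `ω₂'` on `A(S₂)` such that the
multiplication algebra homomorphism `m : A(S₁) ⊗[ℂ] A(S₂) →ₐ A` has image
`A(S₁ ∪ S₂)` and satisfies `ω ∘ m = ω₁' ⊗ ω₂'`.
Moreover, in (ii) one may take `ω₁'`, `ω₂'` to be the restrictions of `ω`. -/
theorem independent_iff_tensor_cover (A : Type*) [CommCStarAlgebra A] [FiniteDimensional ℂ A]
    (ω : A →ₗ[ℂ] ℂ) (hω : IsStateOn ω) (S₁ S₂ : Set A) :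
    ((∀ u ∈ StarAlgebra.adjoin ℂ S₁, ∀ v ∈ StarAlgebra.adjoin ℂ S₂,
        ω (u * v) = ω u * ω v) ↔
      (∃ (ω₁' : (StarAlgebra.adjoin ℂ S₁ : StarSubalgebra ℂ A) →ₗ[ℂ] ℂ)
         (ω₂' : (StarAlgebra.adjoin ℂ S₂ : StarSubalgebra ℂ A) →ₗ[ℂ] ℂ),
        IsStateOn ω₁' ∧ IsStateOn ω₂' ∧
        (mulTensorMap S₁ S₂).range = (StarAlgebra.adjoin ℂ (S₁ ∪ S₂)).toSubalgebra ∧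
        ∀ z, ω (mulTensorMap S₁ S₂ z) = tensorFunctional ω₁' ω₂' z)) ∧
    ((∀ u ∈ StarAlgebra.adjoin ℂ S₁, ∀ v ∈ StarAlgebra.adjoin ℂ S₂,
        ω (u * v) = ω u * ω v) →
      ((mulTensorMap S₁ S₂).range = (StarAlgebra.adjoin ℂ (S₁ ∪ S₂)).toSubalgebra ∧
        ∀ z, ω (mulTensorMap S₁ S₂ z) =
          tensorFunctional (ω.comp (StarAlgebra.adjoin ℂ S₁).subtype.toAlgHom.toLinearMap)
            (ω.comp (StarAlgebra.adjoin ℂ S₂).subtype.toAlgHom.toLinearMap) z)) := by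
  classical
  -- range computation, independent of ω
  have hrange : (mulTensorMap S₁ S₂).range
      = (StarAlgebra.adjoin ℂ (S₁ ∪ S₂)).toSubalgebra := by
    have h1 : ((StarAlgebra.adjoin ℂ S₁).subtype.toAlgHom).range
        = (StarAlgebra.adjoin ℂ S₁).toSubalgebra := by
      ext x; simp [StarSubalgebra.mem_toSubalgebra]
    have h2 : ((StarAlgebra.adjoin ℂ S₂).subtype.toAlgHom).range
        = (StarAlgebra.adjoin ℂ S₂).toSubalgebra := by
      ext x; simp [StarSubalgebra.mem_toSubalgebra]
    rw [mulTensorMap, Algebra.TensorProduct.productMap_range, h1, h2,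
      StarAlgebra.adjoin_toSubalgebra, StarAlgebra.adjoin_toSubalgebra,
      StarAlgebra.adjoin_toSubalgebra, ← Algebra.adjoin_union]
    congr 1
    ext x
    simp only [Set.mem_union, Set.mem_star]
    tauto
  set ω₁ := ω.comp (StarAlgebra.adjoin ℂ S₁).subtype.toAlgHom.toLinearMap with hω₁
  set ω₂ := ω.comp (StarAlgebra.adjoin ℂ S₂).subtype.toAlgHom.toLinearMap with hω₂
  have hs₁ : IsStateOn ω₁ := by
    refine ⟨by simpa [hω₁] using hω.1, fun b => ?_⟩
    simpa [hω₁] using hω.2 (b : A)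
  have hs₂ : IsStateOn ω₂ := by
    refine ⟨by simpa [hω₂] using hω.1, fun b => ?_⟩
    simpa [hω₂] using hω.2 (b : A)
  have key : (∀ u ∈ StarAlgebra.adjoin ℂ S₁, ∀ v ∈ StarAlgebra.adjoin ℂ S₂,
      ω (u * v) = ω u * ω v) →
      ∀ z, ω (mulTensorMap S₁ S₂ z) = tensorFunctional ω₁ ω₂ z := by
    intro h z
    induction z using TensorProduct.induction_on with
    | zero => simp
    | tmul u v =>
        simp only [mulTensorMap, Algebra.TensorProduct.productMap_apply_tmul,
          tensorFunctional, LinearMap.comp_apply, TensorProduct.map_tmul,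
          LinearMap.mul'_apply]
        exact h u u.2 v v.2
    | add x y hx hy => simp [map_add, hx, hy]
  refine ⟨⟨fun h => ⟨ω₁, ω₂, hs₁, hs₂, hrange, key h⟩, ?_⟩,
    fun h => ⟨hrange, key h⟩⟩
  rintro ⟨ω₁', ω₂', h₁, h₂, -, hz⟩
  intro u hu v hv
  have e1 := hz ((⟨u, hu⟩ : StarAlgebra.adjoin ℂ S₁) ⊗ₜ (⟨v, hv⟩ : StarAlgebra.adjoin ℂ S₂))
  have e2 := hz ((⟨u, hu⟩ : StarAlgebra.adjoin ℂ S₁) ⊗ₜ (1 : StarAlgebra.adjoin ℂ S₂))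
  have e3 := hz ((1 : StarAlgebra.adjoin ℂ S₁) ⊗ₜ (⟨v, hv⟩ : StarAlgebra.adjoin ℂ S₂))
  simp only [mulTensorMap, Algebra.TensorProduct.productMap_apply_tmul,
    tensorFunctional, LinearMap.comp_apply, TensorProduct.map_tmul,
    LinearMap.mul'_apply, OneMemClass.coe_one, mul_one, one_mul,
    h₁.1, h₂.1, map_one] at e1 e2 e3
  have e1' : ω (u * v) = ω₁' ⟨u, hu⟩ * ω₂' ⟨v, hv⟩ := e1
  have e2' : ω u = ω₁' ⟨u, hu⟩ := e2
  have e3' : ω v = ω₂' ⟨v, hv⟩ := e3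
  rw [e1', e2', e3']
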